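/- Define Ψ : (I → ℂ) → (I → ℂ) as follows: writing u k = (w k).re and y k = (w k).im, set Ψ w j = ↑(u j + (v j : ℝ) * Real.log (1 + Real.exp (u i))) + Complex.I * ↑(y j + (v j : ℝ) * y i * (1 + Real.exp (-(u i)))⁻¹) if j ≠ i and v j ≥ 0, Ψ w j = ↑(u j + (v j : ℝ) * Real.log (1 + Real.exp (-(u i)))) + Complex.I * ↑(y j - (v j : ℝ) * y i * (1 + Real.exp (u i))⁻¹) if j ≠ i and v j < 0, and Ψ w i = -(w i). Then Ψ is ℝ-differentiable at every point w : I → ℂ, and at every point w with (w i).im = 0 its Fréchet derivative is complex linear: for all h : I → ℂ, (fderiv ℝ Ψ w) (Complex.I • h) = Complex.I • (fderiv ℝ Ψ w) h. -/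

import Mathlib

variable {I : Type*} [Fintype I] [DecidableEq I]

/-- The tangent-bundle transition map of the log mutation at `i`, written in
complex coordinates `w k = u k + I * y k`. -/
noncomputable def PsiMut (i : I) (v : I → ℤ) (w : I → ℂ) : I → ℂ := fun j =>
  if j = i then -(w i)
  else if 0 ≤ v j then
    Complex.ofReal ((w j).re + (v j : ℝ) * Real.log (1 + Real.exp ((w i).re))) +
      Complex.I * Complex.ofReal
        ((w j).im + (v j : ℝ) * (w i).im * (1 + Real.exp (-((w i).re)))⁻¹)
  else
    Complex.ofReal ((w j).re + (v j : ℝ) * Real.log (1 + Real.exp (-((w i).re)))) +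
      Complex.I * Complex.ofReal
        ((w j).im - (v j : ℝ) * (w i).im * (1 + Real.exp ((w i).re))⁻¹)

section Aux

@[fun_prop] lemma PsiMutAux.diff_re : Differentiable ℝ Complex.re := Complex.reCLM.differentiable
@[fun_prop] lemma PsiMutAux.diff_im : Differentiable ℝ Complex.im := Complex.imCLM.differentiable
@[fun_prop] lemma PsiMutAux.diff_ofReal : Differentiable ℝ Complex.ofReal :=
  Complex.ofRealCLM.differentiable

lemma PsiMutAux.hasDerivAt_log1pexp (x : ℝ) :
    HasDerivAt (fun x => Real.log (1 + Real.exp x)) ((1 + Real.exp (-x))⁻¹) x := by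
  have h : HasDerivAt (fun x => 1 + Real.exp x) (Real.exp x) x :=
    (Real.hasDerivAt_exp x).const_add 1
  convert h.log (by positivity) using 1
  rw [Real.exp_neg]
  have h1 : (0:ℝ) < Real.exp x := Real.exp_pos x
  field_simp
  ring

lemma PsiMutAux.hasDerivAt_log1pexpneg (x : ℝ) :
    HasDerivAt (fun x => Real.log (1 + Real.exp (-x))) (-(1 + Real.exp x)⁻¹) x := by
  have h : HasDerivAt (fun x : ℝ => 1 + Real.exp (-x)) (Real.exp (-x) * (-1)) x :=
    (((Real.hasDerivAt_exp (-x)).comp x (hasDerivAt_neg x))).const_add 1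
  convert h.log (by positivity) using 1
  rw [Real.exp_neg]
  have h1 : (0:ℝ) < Real.exp x := Real.exp_pos x
  field_simp
  ring

lemma PsiMutAux.hasDerivAt_invG (x : ℝ) :
    HasDerivAt (fun x : ℝ => (1 + Real.exp (-x))⁻¹)
      (-(Real.exp (-x) * (-1)) / (1 + Real.exp (-x)) ^ 2) x := by
  have h : HasDerivAt (fun x : ℝ => 1 + Real.exp (-x)) (Real.exp (-x) * (-1)) x :=
    (((Real.hasDerivAt_exp (-x)).comp x (hasDerivAt_neg x))).const_add 1
  exact h.inv (by positivity)

lemma PsiMutAux.hasDerivAt_invGpos (x : ℝ) :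
    HasDerivAt (fun x : ℝ => (1 + Real.exp x)⁻¹)
      (-Real.exp x / (1 + Real.exp x) ^ 2) x :=
  ((Real.hasDerivAt_exp x).const_add 1).inv (by positivity)

omit [DecidableEq I] in
lemma PsiMutAux.h_i_re (i : I) (w : I → ℂ) :
    HasFDerivAt (fun w' : I → ℂ => (w' i).re)
      (Complex.reCLM.comp (ContinuousLinearMap.proj i)) w :=
  Complex.reCLM.hasFDerivAt.comp w
    ((ContinuousLinearMap.proj i : (I → ℂ) →L[ℝ] ℂ).hasFDerivAt)

omit [DecidableEq I] in
lemma PsiMutAux.h_i_im (i : I) (w : I → ℂ) :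
    HasFDerivAt (fun w' : I → ℂ => (w' i).im)
      (Complex.imCLM.comp (ContinuousLinearMap.proj i)) w :=
  Complex.imCLM.hasFDerivAt.comp w
    ((ContinuousLinearMap.proj i : (I → ℂ) →L[ℝ] ℂ).hasFDerivAt)

omit [DecidableEq I] in
lemma PsiMutAux.keyPos (i j : I) (c : ℝ) (w : I → ℂ) (hw : (w i).im = 0) :
    HasFDerivAt (fun w' : I → ℂ =>
      Complex.ofReal ((w' j).re + c * Real.log (1 + Real.exp ((w' i).re))) +
        Complex.I * Complex.ofReal
          ((w' j).im + c * (w' i).im * (1 + Real.exp (-((w' i).re)))⁻¹))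
      ((ContinuousLinearMap.proj j : (I → ℂ) →L[ℝ] ℂ) +
        (((c * (1 + Real.exp (-(w i).re))⁻¹ : ℝ) : ℂ)) •
          (ContinuousLinearMap.proj i : (I → ℂ) →L[ℝ] ℂ)) w := by
  have hlog : HasFDerivAt (fun w' : I → ℂ => Real.log (1 + Real.exp ((w' i).re)))
      ((1 + Real.exp (-(w i).re))⁻¹ • (Complex.reCLM.comp (ContinuousLinearMap.proj i))) w :=
    by have hc := (PsiMutAux.hasDerivAt_log1pexp ((w i).re)).comp_hasFDerivAt w (PsiMutAux.h_i_re i w); exact hc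
  have hf : HasFDerivAt (fun w' : I → ℂ => (w' j).re + c * Real.log (1 + Real.exp ((w' i).re)))
      (Complex.reCLM.comp (ContinuousLinearMap.proj j) +
        c • ((1 + Real.exp (-(w i).re))⁻¹ • (Complex.reCLM.comp (ContinuousLinearMap.proj i)))) w :=
    (PsiMutAux.h_i_re j w).add (hlog.const_mul c)
  have hGw : HasFDerivAt (fun w' : I → ℂ => (1 + Real.exp (-((w' i).re)))⁻¹)
      ((-(Real.exp (-(w i).re) * (-1)) / (1 + Real.exp (-(w i).re)) ^ 2) •
        (Complex.reCLM.comp (ContinuousLinearMap.proj i))) w :=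
    by have hc := (PsiMutAux.hasDerivAt_invG ((w i).re)).comp_hasFDerivAt w (PsiMutAux.h_i_re i w); exact hc
  have hp : HasFDerivAt (fun w' : I → ℂ => c * (w' i).im)
      (c • (Complex.imCLM.comp (ContinuousLinearMap.proj i))) w :=
    (PsiMutAux.h_i_im i w).const_mul c
  have hmul := hp.mul hGw
  have hg := (PsiMutAux.h_i_im j w).add hmul
  have hF := ((Complex.ofRealCLM.hasFDerivAt.comp w hf)).add
    ((Complex.ofRealCLM.hasFDerivAt.comp w hg).const_mul Complex.I)
  refine hF.congr_fderiv ?_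
  symm
  ext h
  simp only [ContinuousLinearMap.add_apply, ContinuousLinearMap.smul_apply,
    ContinuousLinearMap.comp_apply, ContinuousLinearMap.coe_comp', Function.comp_apply,
    ContinuousLinearMap.proj_apply, Complex.ofRealCLM_apply, smul_eq_mul, hw,
    Complex.real_smul, Complex.ofReal_mul, Complex.ofReal_add]
  apply Complex.ext <;>
    simp [Complex.ext_iff, hw, Complex.add_re, Complex.add_im, Complex.mul_re, Complex.mul_im] <;>
    ring

omit [DecidableEq I] in
lemma PsiMutAux.keyNeg (i j : I) (c : ℝ) (w : I → ℂ) (hw : (w i).im = 0) :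
    HasFDerivAt (fun w' : I → ℂ =>
      Complex.ofReal ((w' j).re + c * Real.log (1 + Real.exp (-((w' i).re)))) +
        Complex.I * Complex.ofReal
          ((w' j).im - c * (w' i).im * (1 + Real.exp ((w' i).re))⁻¹))
      ((ContinuousLinearMap.proj j : (I → ℂ) →L[ℝ] ℂ) +
        (((-(c * (1 + Real.exp ((w i).re))⁻¹) : ℝ) : ℂ)) •
          (ContinuousLinearMap.proj i : (I → ℂ) →L[ℝ] ℂ)) w := by
  have hlog : HasFDerivAt (fun w' : I → ℂ => Real.log (1 + Real.exp (-((w' i).re))))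
      ((-(1 + Real.exp ((w i).re))⁻¹) • (Complex.reCLM.comp (ContinuousLinearMap.proj i))) w :=
    by have hc := (PsiMutAux.hasDerivAt_log1pexpneg ((w i).re)).comp_hasFDerivAt w (PsiMutAux.h_i_re i w); exact hc
  have hf : HasFDerivAt
      (fun w' : I → ℂ => (w' j).re + c * Real.log (1 + Real.exp (-((w' i).re))))
      (Complex.reCLM.comp (ContinuousLinearMap.proj j) +
        c • ((-(1 + Real.exp ((w i).re))⁻¹) •
          (Complex.reCLM.comp (ContinuousLinearMap.proj i)))) w :=
    (PsiMutAux.h_i_re j w).add (hlog.const_mul c)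
  have hGw : HasFDerivAt (fun w' : I → ℂ => (1 + Real.exp (((w' i).re)))⁻¹)
      ((-Real.exp ((w i).re) / (1 + Real.exp ((w i).re)) ^ 2) •
        (Complex.reCLM.comp (ContinuousLinearMap.proj i))) w :=
    by have hc := (PsiMutAux.hasDerivAt_invGpos ((w i).re)).comp_hasFDerivAt w (PsiMutAux.h_i_re i w); exact hc
  have hp : HasFDerivAt (fun w' : I → ℂ => c * (w' i).im)
      (c • (Complex.imCLM.comp (ContinuousLinearMap.proj i))) w :=
    (PsiMutAux.h_i_im i w).const_mul c
  have hmul := hp.mul hGw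
  have hg := (PsiMutAux.h_i_im j w).sub hmul
  have hF := ((Complex.ofRealCLM.hasFDerivAt.comp w hf)).add
    ((Complex.ofRealCLM.hasFDerivAt.comp w hg).const_mul Complex.I)
  refine hF.congr_fderiv ?_
  symm
  ext h
  simp only [ContinuousLinearMap.add_apply, ContinuousLinearMap.smul_apply,
    ContinuousLinearMap.sub_apply, ContinuousLinearMap.comp_apply,
    ContinuousLinearMap.coe_comp', Function.comp_apply,
    ContinuousLinearMap.proj_apply, Complex.ofRealCLM_apply, smul_eq_mul, hw,
    Complex.real_smul, Complex.ofReal_mul, Complex.ofReal_add]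
  apply Complex.ext <;>
    simp [Complex.ext_iff, hw, Complex.add_re, Complex.add_im, Complex.mul_re, Complex.mul_im] <;>
    ring

lemma PsiMutAux.key (i : I) (v : I → ℤ) (w : I → ℂ) (hw : (w i).im = 0) :
    HasFDerivAt (PsiMut i v)
      (ContinuousLinearMap.pi fun j =>
        if j = i then -(ContinuousLinearMap.proj i : (I → ℂ) →L[ℝ] ℂ)
        else (ContinuousLinearMap.proj j : (I → ℂ) →L[ℝ] ℂ) +
          (((if 0 ≤ v j then ((v j : ℝ) * (1 + Real.exp (-(w i).re))⁻¹ : ℝ)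
            else -((v j : ℝ) * (1 + Real.exp ((w i).re))⁻¹)) : ℝ) : ℂ) •
          (ContinuousLinearMap.proj i : (I → ℂ) →L[ℝ] ℂ)) w := by
  rw [hasFDerivAt_pi]
  intro j
  by_cases hj : j = i
  · subst hj
    simp only [PsiMut, eq_self_iff_true, if_true, ite_true]
    exact ((ContinuousLinearMap.proj j : (I → ℂ) →L[ℝ] ℂ).hasFDerivAt).neg
  · simp only [PsiMut, if_neg hj]
    by_cases hv : 0 ≤ v j
    · simp only [if_pos hv]
      exact PsiMutAux.keyPos i j ((v j : ℝ)) w hw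
    · simp only [if_neg hv]
      exact PsiMutAux.keyNeg i j ((v j : ℝ)) w hw

end Aux

/-- The tangent-bundle transition map is real-differentiable everywhere, and at
every point where the imaginary part of the pivot coordinate vanishes its
Fréchet derivative is complex linear. -/
theorem PsiMut_differentiable_and_complex_linear_deriv
    (i : I) (v : I → ℤ) (hvi : v i = 0) :
    (∀ w : I → ℂ, DifferentiableAt ℝ (PsiMut i v) w) ∧
    ∀ w : I → ℂ, (w i).im = 0 → ∀ h : I → ℂ,
      (fderiv ℝ (PsiMut i v) w) (Complex.I • h) =
        Complex.I • (fderiv ℝ (PsiMut i v) w) h := by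
  constructor
  · intro w
    apply differentiableAt_pi.mpr
    intro j
    by_cases hj : j = i
    · subst hj
      simp only [PsiMut, eq_self_iff_true, if_true, ite_true]
      fun_prop
    · simp only [PsiMut, if_neg hj]
      by_cases hv : 0 ≤ v j
      · simp only [if_pos hv]
        fun_prop (disch := intros; positivity)
      · simp only [if_neg hv]
        fun_prop (disch := intros; positivity)
  · intro w hw h
    rw [(PsiMutAux.key i v w hw).fderiv]
    funext j
    simp only [ContinuousLinearMap.pi_apply, Pi.smul_apply, smul_eq_mul]
    by_cases hj : j = i
    · simp only [if_pos hj, ContinuousLinearMap.neg_apply, ContinuousLinearMap.proj_apply,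
        Pi.smul_apply, smul_eq_mul]
      ring
    · simp only [if_neg hj, ContinuousLinearMap.add_apply, ContinuousLinearMap.smul_apply,
        ContinuousLinearMap.proj_apply, Pi.smul_apply, smul_eq_mul]
      ring
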